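/- arXiv:1402.5801 — 4 statements merged into one kernel-verified Lean document; each statement's English description precedes it below -/
import Mathlib

section
/- For every real number r in the closed interval [1.375, 3] and every ε > 0, there exists a positive rational number x = α/β (with α, β positive integers) such that |λ(x) − r| < ε, where λ(x) = (108x⁴ + 132x² + 11)/(36x⁴ + 96x² + 8). -/
/-- For every real `r ∈ [1.375, 3]` and every `ε > 0`, there is a positive
rational `x = α/β` (with `α, β` positive integers) such that
`|λ(x) − r| < ε`, where `λ(x) = (108x⁴ + 132x² + 11)/(36x⁴ + 96x² + 8)`. -/
theorem spin_slopes_dense :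
    ∀ r ∈ Set.Icc (1.375 : ℝ) 3, ∀ ε > (0 : ℝ), ∃ α β : ℕ, 0 < α ∧ 0 < β ∧
      |(108 * ((α : ℝ) / β) ^ 4 + 132 * ((α : ℝ) / β) ^ 2 + 11) /
          (36 * ((α : ℝ) / β) ^ 4 + 96 * ((α : ℝ) / β) ^ 2 + 8) - r| < ε := by
  intro r hr ε hε
  set g : ℝ → ℝ := fun x => (108*x^4+132*x^2+11)/(36*x^4+96*x^2+8) with hgdef
  have hQ : ∀ x : ℝ, (0:ℝ) < 36*x^4+96*x^2+8 := by intro x; positivity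
  have hcont : Continuous g := by
    apply Continuous.div (by continuity) (by continuity)
    intro x; exact ne_of_gt (hQ x)
  obtain ⟨x0, hx0pos, hx0⟩ : ∃ x0 : ℝ, 0 ≤ x0 ∧ |g x0 - r| ≤ ε/2 := by
    set M : ℝ := max 1 (Real.sqrt (10/ε)) with hMdef
    have hM1 : 1 ≤ M := le_max_left _ _
    have hM0 : (0:ℝ) ≤ M := by linarith
    have hM2 : 10/ε ≤ M^2 := by
      have h1 : Real.sqrt (10/ε) ≤ M := le_max_right _ _
      have h2 : Real.sqrt (10/ε) ^ 2 = 10/ε :=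
        Real.sq_sqrt (le_of_lt (div_pos (by norm_num) hε))
      nlinarith [Real.sqrt_nonneg (10/ε)]
    have hε' : 10 ≤ ε * M^2 := by
      rw [div_le_iff₀ hε] at hM2; linarith [mul_comm (M^2) ε]
    have hgM : 3 - ε/2 < g M := by
      rw [hgdef]
      rw [lt_div_iff₀ (hQ M)]
      nlinarith [hQ M, sq_nonneg M, sq_nonneg (M^2), hε.le, mul_pos hε (mul_pos (hQ M) (hQ M))]
    have hgM3 : g M < 3 := by
      rw [hgdef]
      rw [div_lt_iff₀ (hQ M)]
      nlinarith [sq_nonneg M]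
    by_cases hcase : r ≤ g M
    · have hg0 : g 0 = 1.375 := by norm_num [hgdef]
      have hmem : r ∈ Set.Icc (g 0) (g M) := ⟨by rw [hg0]; exact hr.1, hcase⟩
      obtain ⟨x, hx, hgx⟩ := intermediate_value_Icc hM0 hcont.continuousOn hmem
      refine ⟨x, hx.1, ?_⟩
      rw [hgx]; simp; positivity
    · push_neg at hcase
      refine ⟨M, hM0, ?_⟩
      rw [abs_le]
      constructor
      · have := hr.2; linarith
      · linarith
  obtain ⟨δ, hδpos, hδ⟩ := Metric.continuousAt_iff.mp hcont.continuousAt (ε/2) (by linarith)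
  obtain ⟨q, hq1, hq2⟩ := exists_rat_btwn (show x0 < x0 + δ by linarith)
  have hqpos : (0:ℝ) < (q:ℝ) := lt_of_le_of_lt hx0pos hq1
  have hqpos' : 0 < q := by exact_mod_cast hqpos
  have hnum : 0 < q.num := Rat.num_pos.mpr hqpos'
  have hdist : dist ((q:ℝ)) x0 < δ := by
    rw [Real.dist_eq, abs_of_pos (by linarith)]; linarith
  have hgq : dist (g (q:ℝ)) (g x0) < ε/2 := hδ hdist
  refine ⟨q.num.toNat, q.den, ?_, q.pos, ?_⟩
  · omega
  · have hcast : ((q.num.toNat : ℝ)) / (q.den : ℝ) = (q : ℝ) := by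
      rw [Rat.cast_def]
      congr 1
      exact_mod_cast Int.toNat_of_nonneg hnum.le
    rw [hcast]
    have h1 : |g (q:ℝ) - g x0| < ε/2 := by rwa [Real.dist_eq] at hgq
    have h2 : |g (q:ℝ) - r| ≤ |g (q:ℝ) - g x0| + |g x0 - r| := abs_sub_le _ _ _
    have : |g (q:ℝ) - r| < ε := by linarith
    simpa [hgdef] using this
end

section
/- The function λ(x) = (108x⁴ + 132x² + 11)/(36x⁴ + 96x² + 8), defined for x ≥ 0 (including the limit at +∞), has image exactly the interval [11/8, 3]: λ(0) = 11/8, the limit of λ(x) as x → ∞ equals 3, λ is strictly increasing on [0, ∞), and every value in [11/8, 3) is attained. -/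
open Filter

/-- The slope function for the spin construction. -/
noncomputable def lamSpin (x : ℝ) : ℝ :=
  (108 * x ^ 4 + 132 * x ^ 2 + 11) / (36 * x ^ 4 + 96 * x ^ 2 + 8)

lemma lamSpin_denom_pos (x : ℝ) : 0 < 36 * x ^ 4 + 96 * x ^ 2 + 8 := by positivity

lemma lamSpin_cont : Continuous lamSpin := by
  apply Continuous.div (by continuity) (by continuity)
  intro x
  exact ne_of_gt (lamSpin_denom_pos x)

lemma lamSpin_sub (x : ℝ) :
    3 - lamSpin x = 13 * (12 * x ^ 2 + 1) / (36 * x ^ 4 + 96 * x ^ 2 + 8) := by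
  have h := (lamSpin_denom_pos x).ne'
  rw [lamSpin]
  field_simp
  ring

lemma lamSpin_tendsto : Tendsto lamSpin atTop (nhds 3) := by
  have hg : Tendsto (fun x : ℝ => 3 - lamSpin x) atTop (nhds 0) := by
    apply squeeze_zero' (g := fun x : ℝ => 5 / x ^ 2)
    · filter_upwards [eventually_ge_atTop (1 : ℝ)] with x hx
      rw [lamSpin_sub]
      positivity
    · filter_upwards [eventually_ge_atTop (1 : ℝ)] with x hx
      rw [lamSpin_sub]
      have hx2 : (0 : ℝ) < x ^ 2 := by positivity
      rw [div_le_div_iff₀ (lamSpin_denom_pos x) hx2]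
      nlinarith [sq_nonneg x, sq_nonneg (x ^ 2)]
    · have h1 : Tendsto (fun x : ℝ => x ^ 2) atTop atTop :=
        tendsto_pow_atTop (by norm_num)
      simpa using (tendsto_const_nhds (x := (5 : ℝ))).div_atTop h1
  have := (tendsto_const_nhds (x := (3 : ℝ)) (f := atTop)).sub hg
  simpa using this

lemma lamSpin_mono : StrictMonoOn lamSpin (Set.Ici 0) := by
  intro a ha b hb hab
  simp only [Set.mem_Ici] at ha hb
  rw [lamSpin, lamSpin, div_lt_div_iff₀ (lamSpin_denom_pos a) (lamSpin_denom_pos b)]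
  have hb0 : 0 < b := lt_of_le_of_lt ha hab
  have key : 0 < (b - a) * (b + a) * (12 * a ^ 2 * b ^ 2 + a ^ 2 + b ^ 2) := by
    apply mul_pos (mul_pos (by linarith) (by linarith))
    nlinarith [sq_nonneg a, sq_nonneg (a * b)]
  nlinarith [key]

/-- `λ(x) = (108x⁴+132x²+11)/(36x⁴+96x²+8)` satisfies `λ(0) = 11/8`,
`λ(x) → 3` as `x → ∞`, `λ` is strictly increasing on `[0, ∞)`, and every value
in `[11/8, 3)` is attained on `[0, ∞)`; hence its image (including the limit at `+∞`)
is exactly `[11/8, 3]`. -/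
theorem lamSpin_image :
    lamSpin 0 = 11 / 8 ∧
    Tendsto lamSpin atTop (nhds 3) ∧
    StrictMonoOn lamSpin (Set.Ici 0) ∧
    (∀ y ∈ Set.Ico (11 / 8 : ℝ) 3, ∃ x, 0 ≤ x ∧ lamSpin x = y) := by
  have h0 : lamSpin 0 = 11 / 8 := by norm_num [lamSpin]
  refine ⟨h0, lamSpin_tendsto, lamSpin_mono, ?_⟩
  intro y hy
  obtain ⟨hy1, hy2⟩ := hy
  -- find X ≥ 0 with y < lamSpin X
  have hev : ∀ᶠ x : ℝ in atTop, y < lamSpin x :=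
    lamSpin_tendsto.eventually (eventually_gt_nhds hy2)
  obtain ⟨X, hX0, hXy⟩ := ((eventually_ge_atTop (0 : ℝ)).and hev).exists
  have hIcc : Set.Icc (lamSpin 0) (lamSpin X) ⊆ lamSpin '' Set.Icc 0 X :=
    intermediate_value_Icc hX0 lamSpin_cont.continuousOn
  have hymem : y ∈ Set.Icc (lamSpin 0) (lamSpin X) := ⟨h0 ▸ hy1, le_of_lt hXy⟩
  obtain ⟨x, hx, hxy⟩ := hIcc hymem
  exact ⟨x, hx.1, hxy⟩
end

section
/- For any prime p ≥ 5, writing c(q, m) := 12·s(q, m) + l(q, m) where s is the Dedekind sum and l is the length of the Hirzebruch–Jung continued fraction of m/q, one has c(4p − 1, 4p) = (4p − 1)/(2p). -/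
/-- The length `l(q, m)` of the Hirzebruch–Jung continued fraction
`m/q = e₁ − 1/(e₂ − 1/(⋯ − 1/e_l))` (all `eᵢ ≥ 2`), computed by the
Hirzebruch–Jung algorithm: `e = ⌈m/q⌉` and the next pair is `(q, q⌈m/q⌉ − m)`.
`hjLength m q` is `l(q, m)`. -/
def hjLength : ℕ → ℕ → ℕ
  | _, 0 => 0
  | m, q + 1 => 1 + hjLength (q + 1) ((q + 1) * ((m + q) / (q + 1)) - m)
termination_by m q => q
decreasing_by
  have h : (m + q) / (q + 1) * (q + 1) ≤ m + q := Nat.div_mul_le_self _ _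
  have h2 : (q + 1) * ((m + q) / (q + 1)) = (m + q) / (q + 1) * (q + 1) := Nat.mul_comm _ _
  omega

/-- Evaluation of a Hirzebruch–Jung continued fraction `[e₁, …, e_l]` as the
rational number `e₁ − 1/(e₂ − 1/(⋯ − 1/e_l))`. -/
def hjEval : List ℕ → ℚ
  | [] => 0
  | [e] => (e : ℚ)
  | e :: rest => (e : ℚ) - 1 / hjEval rest


/-- The sawtooth function `((x)) = x − ⌊x⌋ − 1/2` for non-integer `x`, and `0` for
integer `x`. -/
def sawtooth (x : ℚ) : ℚ := if (⌊x⌋ : ℚ) = x then 0 else x - ⌊x⌋ - 1 / 2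

/-- The Dedekind sum `s(q, m) = Σ_{i=1}^{m−1} ((i/m)) ((iq/m))`. -/
def dedekindSum (q m : ℕ) : ℚ :=
  ∑ i ∈ Finset.Ico 1 m, sawtooth ((i : ℚ) / m) * sawtooth ((i * q : ℚ) / m)

/-- `c(q, m) := 12·s(q, m) + l(q, m)`, with `s` the Dedekind sum and `l` the length of
the Hirzebruch–Jung continued fraction of `m/q`. -/
def hjDedekindC (q m : ℕ) : ℚ := 12 * dedekindSum q m + (hjLength m q : ℚ)

lemma hjLength_pred (n : ℕ) : hjLength (n + 2) (n + 1) = n + 1 := by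
  induction n with
  | zero =>
    rw [hjLength]
    norm_num
    rw [hjLength]
  | succ k ih =>
    rw [hjLength]
    have h1 : (k + 1 + 1) * ((k + 1 + 2 + (k + 1)) / (k + 1 + 1)) - (k + 1 + 2) = k + 1 := by
      have e : k + 1 + 2 + (k + 1) = (k + 1 + 1) * 2 := by ring
      rw [e, Nat.mul_div_cancel_left 2 (by omega : 0 < k + 1 + 1)]
      omega
    rw [h1, ih]
    omega

lemma sum_quad (m : ℕ) (a b c : ℚ) :
    ∑ i ∈ Finset.range m, (a * (i:ℚ)^2 + b * i + c)
      = a * ((m:ℚ)*((m:ℚ)-1)*(2*(m:ℚ)-1)/6) + b * ((m:ℚ)*((m:ℚ)-1)/2) + c * m := by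
  induction m with
  | zero => simp
  | succ n ih =>
    rw [Finset.sum_range_succ, ih]
    push_cast
    ring

lemma dedekind_neg_one (m : ℕ) (hm : 2 ≤ m) :
    dedekindSum (m - 1) m = -((m:ℚ)-1)*((m:ℚ)-2)/(12*m) := by
  have hm0 : (0:ℚ) < m := by exact_mod_cast Nat.lt_of_lt_of_le (by norm_num) hm
  have hmne : (m:ℚ) ≠ 0 := ne_of_gt hm0
  have hc : ((m - 1 : ℕ) : ℚ) = (m:ℚ) - 1 := by
    push_cast [Nat.cast_sub (by omega : 1 ≤ m)]; ring
  unfold dedekindSum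
  have key : ∀ i ∈ Finset.Ico 1 m,
      sawtooth ((i : ℚ) / m) * sawtooth (((i:ℚ) * ((m - 1 : ℕ):ℚ)) / m)
        = -(1/(m:ℚ)^2) * (i:ℚ)^2 + (1/(m:ℚ)) * (i:ℚ) + (-(1/4)) := by
    intro i hi
    rw [Finset.mem_Ico] at hi
    have hi1 : (1:ℚ) ≤ (i:ℚ) := by exact_mod_cast hi.1
    have him : (i:ℚ) < (m:ℚ) := by exact_mod_cast hi.2
    have hf1 : ⌊(i:ℚ) / m⌋ = 0 := by
      rw [Int.floor_eq_zero_iff]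
      constructor
      · positivity
      · rw [div_lt_one hm0]; exact him
    have hf2 : ⌊((i:ℚ) * ((m - 1 : ℕ):ℚ)) / m⌋ = (i : ℤ) - 1 := by
      rw [hc, Int.floor_eq_iff]
      push_cast
      constructor
      · rw [le_div_iff₀ hm0]; nlinarith
      · rw [div_lt_iff₀ hm0]; nlinarith
    rw [sawtooth, sawtooth, hf1, hf2, if_neg, if_neg]
    · push_cast [hc]
      field_simp
      ring
    · rw [hc]
      push_cast
      intro h
      rw [eq_div_iff hmne] at h
      nlinarith
    · push_cast
      intro h
      rw [eq_div_iff hmne] at h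
      nlinarith
  rw [Finset.sum_congr rfl key]
  have hbot := Finset.sum_eq_sum_Ico_succ_bot (a := 0) (b := m) (by omega)
    (fun i => -(1/(m:ℚ)^2) * (i:ℚ)^2 + (1/(m:ℚ)) * (i:ℚ) + (-(1/4)))
  have hrange : ∑ i ∈ Finset.range m, (-(1/(m:ℚ)^2) * (i:ℚ)^2 + (1/(m:ℚ)) * (i:ℚ) + (-(1/4)))
      = ∑ i ∈ Finset.Ico 0 m, (-(1/(m:ℚ)^2) * (i:ℚ)^2 + (1/(m:ℚ)) * (i:ℚ) + (-(1/4))) := by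
    rw [Finset.range_eq_Ico]
  rw [← hrange, sum_quad] at hbot
  have : ∑ i ∈ Finset.Ico 1 m, (-(1/(m:ℚ)^2) * (i:ℚ)^2 + (1/(m:ℚ)) * (i:ℚ) + (-(1/4)))
      = -(1/(m:ℚ)^2) * ((m:ℚ)*((m:ℚ)-1)*(2*(m:ℚ)-1)/6) + (1/(m:ℚ)) * ((m:ℚ)*((m:ℚ)-1)/2)
        + (-(1/4)) * m - (-(1/4)) := by
    push_cast at hbot
    linarith [hbot]
  rw [this]
  field_simp
  ring

/-- for any prime `p ≥ 5`, `c(4p−1, 4p) = (4p−1)/(2p)`. -/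
theorem c_fourPSubOne (p : ℕ) (hp : p.Prime) (h5 : 5 ≤ p) :
    hjDedekindC (4 * p - 1) (4 * p) = ((4 * p : ℚ) - 1) / (2 * p) := by
  have hm : 2 ≤ 4 * p := by omega
  have hp0 : (0:ℚ) < p := by exact_mod_cast (by omega : 0 < p)
  have hpne : (p:ℚ) ≠ 0 := ne_of_gt hp0
  unfold hjDedekindC
  rw [dedekind_neg_one (4 * p) hm]
  have hl : hjLength (4 * p) (4 * p - 1) = 4 * p - 1 := by
    obtain ⟨n, hn⟩ : ∃ n, 4 * p = n + 2 := ⟨4 * p - 2, by omega⟩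
    rw [hn, show n + 2 - 1 = n + 1 from by omega, hjLength_pred]
  rw [hl]
  have hcast : ((4 * p - 1 : ℕ) : ℚ) = 4 * (p:ℚ) - 1 := by
    rw [Nat.cast_sub (by omega : 1 ≤ 4 * p)]
    push_cast
    ring
  rw [hcast]
  push_cast
  field_simp
  ring
end

section
/- Define, for positive integers α, β, d and prime p, with n = 12αp: c̄₁² = n⁴ + 2t₂ − 40d − 48 and c̄₂ = n⁴/3 + t₂ − 16d − 12, with t₂, t_{2,1}, t_{2,2} as in the spin construction; set C₁²(p) = 4p·c̄₁² − 2(t₂ + 2G) + S/(4p) − ((4p−1)/(2p))t_{2,1} − ((2p²+1)/(2p))t_{2,2} and C₂(p) = 4p·c̄₂ − (t₂ + 2G) + (4p−1)t_{2,1} + 3t_{2,2}, where G and S are any functions of p growing at most like O(p³). Then lim_{p→∞} C₁²(p)/C₂(p) = (108x⁴ + 132x² + 11)/(36x⁴ + 96x² + 8) with x = α/β. -/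
open Filter

noncomputable def C1faux (α β d : ℕ) (G S : ℕ → ℝ) (p : ℕ) : ℝ :=
  let q : ℝ := (p : ℝ)
  let t2 : ℝ := 13824 * (β : ℝ) ^ 2 * (α : ℝ) ^ 2 * q ^ 4 + 1152 * (β : ℝ) ^ 4 * q ^ 4 +
    4608 * (d : ℝ) * (α : ℝ) ^ 2 * q ^ 2 + 768 * (d : ℝ) * (β : ℝ) ^ 2 * q ^ 2 +
    32 * (d : ℝ) ^ 2 - 100 * (d : ℝ)
  let t21 : ℝ := 384 * (β : ℝ) ^ 4 * q ^ 4 + 4608 * (α : ℝ) ^ 2 * (β : ℝ) ^ 2 * q ^ 4 +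
    2304 * (d : ℝ) * (α : ℝ) ^ 2 * q ^ 2 - 52 * (d : ℝ) +
    384 * (d : ℝ) * (β : ℝ) ^ 2 * q ^ 2 + 16 * (d : ℝ) ^ 2
  let t22 : ℝ := 768 * (β : ℝ) ^ 4 * q ^ 4 + 9216 * (α : ℝ) ^ 2 * (β : ℝ) ^ 2 * q ^ 4 +
    2304 * (d : ℝ) * (α : ℝ) ^ 2 * q ^ 2 - 48 * (d : ℝ) +
    384 * (d : ℝ) * (β : ℝ) ^ 2 * q ^ 2 + 16 * (d : ℝ) ^ 2
  let n4 : ℝ := (12 * (α : ℝ) * q) ^ 4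
  let cbar1 : ℝ := n4 + 2 * t2 - 40 * (d : ℝ) - 48
  4 * q * cbar1 - 2 * (t2 + 2 * G p) + S p / (4 * q) -
    ((4 * q - 1) / (2 * q)) * t21 - ((2 * q ^ 2 + 1) / (2 * q)) * t22

noncomputable def C2faux (α β d : ℕ) (G : ℕ → ℝ) (p : ℕ) : ℝ :=
  let q : ℝ := (p : ℝ)
  let t2 : ℝ := 13824 * (β : ℝ) ^ 2 * (α : ℝ) ^ 2 * q ^ 4 + 1152 * (β : ℝ) ^ 4 * q ^ 4 +
    4608 * (d : ℝ) * (α : ℝ) ^ 2 * q ^ 2 + 768 * (d : ℝ) * (β : ℝ) ^ 2 * q ^ 2 +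
    32 * (d : ℝ) ^ 2 - 100 * (d : ℝ)
  let t21 : ℝ := 384 * (β : ℝ) ^ 4 * q ^ 4 + 4608 * (α : ℝ) ^ 2 * (β : ℝ) ^ 2 * q ^ 4 +
    2304 * (d : ℝ) * (α : ℝ) ^ 2 * q ^ 2 - 52 * (d : ℝ) +
    384 * (d : ℝ) * (β : ℝ) ^ 2 * q ^ 2 + 16 * (d : ℝ) ^ 2
  let t22 : ℝ := 768 * (β : ℝ) ^ 4 * q ^ 4 + 9216 * (α : ℝ) ^ 2 * (β : ℝ) ^ 2 * q ^ 4 +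
    2304 * (d : ℝ) * (α : ℝ) ^ 2 * q ^ 2 - 48 * (d : ℝ) +
    384 * (d : ℝ) * (β : ℝ) ^ 2 * q ^ 2 + 16 * (d : ℝ) ^ 2
  let n4 : ℝ := (12 * (α : ℝ) * q) ^ 4
  let cbar2 : ℝ := n4 / 3 + t2 - 16 * (d : ℝ) - 12
  4 * q * cbar2 - (t2 + 2 * G p) + (4 * q - 1) * t21 + 3 * t22

noncomputable def h1aux (α β d : ℕ) (u : ℝ) : ℝ :=
  (82944*(α:ℝ)^4 + 101376*(α:ℝ)^2*(β:ℝ)^2 + 8448*(β:ℝ)^4)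
  + (-36864*(α:ℝ)^2*(β:ℝ)^2 - 3072*(β:ℝ)^4) * u
  + (34560*(α:ℝ)^2*(d:ℝ) + 5760*(β:ℝ)^2*(d:ℝ) - 192*(β:ℝ)^4 - 2304*(α:ℝ)^2*(β:ℝ)^2) * u^2
  + (-13824*(α:ℝ)^2*(d:ℝ) - 2304*(β:ℝ)^2*(d:ℝ)) * u^3
  + (240*(d:ℝ)^2 - 912*(d:ℝ) - 192) * u^4
  + (-96*(d:ℝ)^2 + 304*(d:ℝ)) * u^5
  + (-2*(d:ℝ)) * u^6

noncomputable def h2aux (α β d : ℕ) (u : ℝ) : ℝ :=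
  (27648*(α:ℝ)^4 + 73728*(α:ℝ)^2*(β:ℝ)^2 + 6144*(β:ℝ)^4)
  + (9216*(α:ℝ)^2*(β:ℝ)^2 + 768*(β:ℝ)^4) * u
  + (27648*(α:ℝ)^2*(d:ℝ) + 4608*(β:ℝ)^2*(d:ℝ)) * u^2
  + (192*(d:ℝ)^2 - 672*(d:ℝ) - 48) * u^4
  + (8*(d:ℝ)) * u^5

lemma C1f_eq (α β d : ℕ) (G S : ℕ → ℝ) (p : ℕ) (hq : ((p:ℝ)) ≠ 0) :
    C1faux α β d G S p =
      (h1aux α β d (1/(p:ℝ)) - 4 * G p / (p:ℝ)^5 + S p / (4*(p:ℝ)^6)) * (p:ℝ)^5 := by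
  unfold C1faux h1aux
  field_simp
  ring

lemma C2f_eq (α β d : ℕ) (G : ℕ → ℝ) (p : ℕ) (hq : ((p:ℝ)) ≠ 0) :
    C2faux α β d G p =
      (h2aux α β d (1/(p:ℝ)) - 2 * G p / (p:ℝ)^5) * (p:ℝ)^5 := by
  unfold C2faux h2aux
  field_simp
  ring

/-- with `n = 12αp`, `t₂, t_{2,1}, t_{2,2}` as in the spin construction,
`c̄₁² = n⁴ + 2t₂ − 40d − 48`, `c̄₂ = n⁴/3 + t₂ − 16d − 12`,
`C₁²(p) = 4p·c̄₁² − 2(t₂ + 2G(p)) + S(p)/(4p) − ((4p−1)/(2p))t_{2,1} − ((2p²+1)/(2p))t_{2,2}`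
and `C₂(p) = 4p·c̄₂ − (t₂ + 2G(p)) + (4p−1)t_{2,1} + 3t_{2,2}`, where `G` and `S` grow at
most like `O(p³)`, we have `C₁²(p)/C₂(p) → (108x⁴+132x²+11)/(36x⁴+96x²+8)` as the prime
`p → ∞`, with `x = α/β`. -/
theorem spin_chern_slope_limit (α β d : ℕ) (hα : 0 < α) (hβ : 0 < β) (hd : 0 < d)
    (G S : ℕ → ℝ) (CG CS : ℝ)
    (hG : ∀ p : ℕ, |G p| ≤ CG * (p : ℝ) ^ 3) (hS : ∀ p : ℕ, |S p| ≤ CS * (p : ℝ) ^ 3) :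
    Tendsto (fun p : ℕ =>
      let q : ℝ := (p : ℝ)
      let t2 : ℝ := 13824 * (β : ℝ) ^ 2 * (α : ℝ) ^ 2 * q ^ 4 + 1152 * (β : ℝ) ^ 4 * q ^ 4 +
        4608 * (d : ℝ) * (α : ℝ) ^ 2 * q ^ 2 + 768 * (d : ℝ) * (β : ℝ) ^ 2 * q ^ 2 +
        32 * (d : ℝ) ^ 2 - 100 * (d : ℝ)
      let t21 : ℝ := 384 * (β : ℝ) ^ 4 * q ^ 4 + 4608 * (α : ℝ) ^ 2 * (β : ℝ) ^ 2 * q ^ 4 +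
        2304 * (d : ℝ) * (α : ℝ) ^ 2 * q ^ 2 - 52 * (d : ℝ) +
        384 * (d : ℝ) * (β : ℝ) ^ 2 * q ^ 2 + 16 * (d : ℝ) ^ 2
      let t22 : ℝ := 768 * (β : ℝ) ^ 4 * q ^ 4 + 9216 * (α : ℝ) ^ 2 * (β : ℝ) ^ 2 * q ^ 4 +
        2304 * (d : ℝ) * (α : ℝ) ^ 2 * q ^ 2 - 48 * (d : ℝ) +
        384 * (d : ℝ) * (β : ℝ) ^ 2 * q ^ 2 + 16 * (d : ℝ) ^ 2
      let n4 : ℝ := (12 * (α : ℝ) * q) ^ 4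
      let cbar1 : ℝ := n4 + 2 * t2 - 40 * (d : ℝ) - 48
      let cbar2 : ℝ := n4 / 3 + t2 - 16 * (d : ℝ) - 12
      let C1 : ℝ := 4 * q * cbar1 - 2 * (t2 + 2 * G p) + S p / (4 * q) -
        ((4 * q - 1) / (2 * q)) * t21 - ((2 * q ^ 2 + 1) / (2 * q)) * t22
      let C2 : ℝ := 4 * q * cbar2 - (t2 + 2 * G p) + (4 * q - 1) * t21 + 3 * t22
      C1 / C2)
      (atTop ⊓ Filter.principal {p : ℕ | p.Prime})
      (nhds ((108 * ((α : ℝ) / β) ^ 4 + 132 * ((α : ℝ) / β) ^ 2 + 11) /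
        (36 * ((α : ℝ) / β) ^ 4 + 96 * ((α : ℝ) / β) ^ 2 + 8))) := by
  refine Tendsto.mono_left ?_ inf_le_left
  have hA : (0:ℝ) < (α:ℝ) := by exact_mod_cast hα
  have hB : (0:ℝ) < (β:ℝ) := by exact_mod_cast hβ
  have hden0 : h2aux α β d 0 ≠ 0 := by
    have e : h2aux α β d 0 = 27648*(α:ℝ)^4 + 73728*(α:ℝ)^2*(β:ℝ)^2 + 6144*(β:ℝ)^4 := by
      unfold h2aux; ring
    rw [e]; positivity
  have hc1 : Continuous (h1aux α β d) := by unfold h1aux; fun_prop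
  have hc2 : Continuous (h2aux α β d) := by unfold h2aux; fun_prop
  have h0 : Tendsto (fun p : ℕ => 1/(p:ℝ)) atTop (nhds 0) :=
    tendsto_one_div_atTop_nhds_zero_nat
  have l1 : Tendsto (fun p : ℕ => h1aux α β d (1/(p:ℝ))) atTop (nhds (h1aux α β d 0)) :=
    (hc1.tendsto 0).comp h0
  have l2 : Tendsto (fun p : ℕ => h2aux α β d (1/(p:ℝ))) atTop (nhds (h2aux α β d 0)) :=
    (hc2.tendsto 0).comp h0
  have gz : Tendsto (fun p : ℕ => 4 * G p / (p:ℝ)^5) atTop (nhds 0) := by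
    apply squeeze_zero_norm' (a := fun p : ℕ => 4*CG*(1/(p:ℝ))^2)
    · filter_upwards [eventually_ge_atTop 1] with p hp
      have hq : (0:ℝ) < (p:ℝ) := by exact_mod_cast hp
      have hq' : ((p:ℝ)) ≠ 0 := ne_of_gt hq
      have e : ‖4 * G p / (p:ℝ)^5‖ = 4 * |G p| / (p:ℝ)^5 := by
        rw [Real.norm_eq_abs, abs_div, abs_mul, abs_pow, abs_of_pos hq]
        norm_num
      rw [e]
      calc 4 * |G p| / (p:ℝ)^5 ≤ 4 * (CG * (p:ℝ)^3) / (p:ℝ)^5 := by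
            gcongr
            exact hG p
        _ = 4*CG*(1/(p:ℝ))^2 := by field_simp
    · have := tendsto_const_nhds (x := (4*CG : ℝ)) (f := atTop (α := ℕ)) |>.mul (h0.pow 2)
      simpa using this
  have sz : Tendsto (fun p : ℕ => S p / (4*(p:ℝ)^6)) atTop (nhds 0) := by
    apply squeeze_zero_norm' (a := fun p : ℕ => (CS/4)*(1/(p:ℝ))^3)
    · filter_upwards [eventually_ge_atTop 1] with p hp
      have hq : (0:ℝ) < (p:ℝ) := by exact_mod_cast hp
      have hq' : ((p:ℝ)) ≠ 0 := ne_of_gt hq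
      have e : ‖S p / (4*(p:ℝ)^6)‖ = |S p| / (4*(p:ℝ)^6) := by
        rw [Real.norm_eq_abs, abs_div, abs_mul, abs_pow, abs_of_pos hq]
        norm_num
      rw [e]
      calc |S p| / (4*(p:ℝ)^6) ≤ (CS * (p:ℝ)^3) / (4*(p:ℝ)^6) := by
            gcongr
            exact hS p
        _ = (CS/4)*(1/(p:ℝ))^3 := by field_simp
    · have := tendsto_const_nhds (x := (CS/4 : ℝ)) (f := atTop (α := ℕ)) |>.mul (h0.pow 3)
      simpa using this
  have gz2 : Tendsto (fun p : ℕ => 2 * G p / (p:ℝ)^5) atTop (nhds 0) := by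
    have h := tendsto_const_nhds (x := (1/2 : ℝ)) (f := atTop (α := ℕ)) |>.mul gz
    have e : (fun p : ℕ => (1/2 : ℝ) * (4 * G p / (p:ℝ)^5)) =
        fun p : ℕ => 2 * G p / (p:ℝ)^5 := by
      funext p; ring
    rw [e] at h; simpa using h
  have hnum : Tendsto (fun p : ℕ =>
      h1aux α β d (1/(p:ℝ)) - 4 * G p / (p:ℝ)^5 + S p / (4*(p:ℝ)^6)) atTop
      (nhds (h1aux α β d 0)) := by
    have := (l1.sub gz).add sz
    simpa using this
  have hden : Tendsto (fun p : ℕ =>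
      h2aux α β d (1/(p:ℝ)) - 2 * G p / (p:ℝ)^5) atTop (nhds (h2aux α β d 0)) := by
    have := l2.sub gz2
    simpa using this
  have hval : (108 * ((α : ℝ) / β) ^ 4 + 132 * ((α : ℝ) / β) ^ 2 + 11) /
      (36 * ((α : ℝ) / β) ^ 4 + 96 * ((α : ℝ) / β) ^ 2 + 8) =
      h1aux α β d 0 / h2aux α β d 0 := by
    have hd2 : (36 * ((α : ℝ) / β) ^ 4 + 96 * ((α : ℝ) / β) ^ 2 + 8) ≠ 0 := by positivity
    rw [div_eq_div_iff hd2 hden0]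
    unfold h1aux h2aux
    field_simp
    ring
  rw [hval]
  show Tendsto (fun p : ℕ => C1faux α β d G S p / C2faux α β d G p) atTop _
  have heq : ∀ᶠ p in atTop, C1faux α β d G S p / C2faux α β d G p =
      (h1aux α β d (1/(p:ℝ)) - 4 * G p / (p:ℝ)^5 + S p / (4*(p:ℝ)^6)) /
      (h2aux α β d (1/(p:ℝ)) - 2 * G p / (p:ℝ)^5) := by
    filter_upwards [eventually_ge_atTop 1] with p hp
    have hq : (0:ℝ) < (p:ℝ) := by exact_mod_cast hp
    have hq' : ((p:ℝ)) ≠ 0 := ne_of_gt hq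
    rw [C1f_eq α β d G S p hq', C2f_eq α β d G p hq',
      mul_div_mul_right _ _ (pow_ne_zero 5 hq')]
  rw [tendsto_congr' heq]
  exact hnum.div hden hden0
end
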